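/- Let (X,Σ,μ) be a measure space and 1 ≤ p < ∞. If a family 𝓕 ⊆ Λ^p(X) is totally bounded with respect to the F-norm distance d(f,g) = ν_p(f−g), then for every M > 0 the truncated family T_M(𝓕) = { T_M ∘ f : f ∈ 𝓕 } is totally bounded in L^p(X) with respect to the L^p norm distance. -/

import Mathlib

open MeasureTheory ENNReal Filter Topology

/-- The F-norm `ν_p(g) = (∫ min(|g|,1)^p dμ)^{1/p}` of the asymptotic `L_p` space. -/
noncomputable def nuF {X : Type*} [MeasurableSpace X] (μ : Measure X) (p : ℝ) (g : X → ℝ) :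
    ℝ≥0∞ :=
  (∫⁻ x, ENNReal.ofReal (min |g x| 1 ^ p) ∂μ) ^ (1 / p)

/-- The `L^p` norm `(∫ |g|^p dμ)^{1/p}`. -/
noncomputable def lpNorm {X : Type*} [MeasurableSpace X] (μ : Measure X) (p : ℝ) (g : X → ℝ) :
    ℝ≥0∞ :=
  (∫⁻ x, ENNReal.ofReal (|g x| ^ p) ∂μ) ^ (1 / p)

/-- Membership in the asymptotic `L_p` space `Λ^p(X)`. -/
def MemLambda {X : Type*} [MeasurableSpace X] (μ : Measure X) (p : ℝ) (f : X → ℝ) : Prop :=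
  Measurable f ∧ ∫⁻ x, ENNReal.ofReal (min |f x| 1 ^ p) ∂μ < ⊤

/-- Membership in `L^p(X)`. -/
def MemLp' {X : Type*} [MeasurableSpace X] (μ : Measure X) (p : ℝ) (f : X → ℝ) : Prop :=
  Measurable f ∧ ∫⁻ x, ENNReal.ofReal (|f x| ^ p) ∂μ < ⊤

/-- The truncation map `T_M(t) = max(-M, min(t, M))`. -/
def trunc (M : ℝ) (t : ℝ) : ℝ := max (-M) (min t M)

/-- A family `F` is totally bounded with respect to a distance `d` if for every `ε > 0`
there are finitely many functions such that every `f ∈ F` is within `ε` of one of them. -/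
def TotallyBoundedDist {X : Type*} (d : (X → ℝ) → (X → ℝ) → ℝ≥0∞) (F : Set (X → ℝ)) : Prop :=
  ∀ ε : ℝ≥0∞, 0 < ε → ∃ G : Finset (X → ℝ), ∀ f ∈ F, ∃ g ∈ G, d f g < ε
-- pointwise Lipschitz
lemma trunc_lip (M a b : ℝ) : |trunc M a - trunc M b| ≤ |a - b| := by
  unfold trunc
  rw [max_comm (-M) (min a M), max_comm (-M) (min b M)]
  calc |max (min a M) (-M) - max (min b M) (-M)| ≤ |min a M - min b M| :=
        abs_max_sub_max_le_abs _ _ _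
    _ ≤ max |a - b| |M - M| := abs_min_sub_min_le_max _ _ _ _
    _ ≤ |a - b| := by simp

lemma trunc_bdd (M a b : ℝ) (hM : 0 < M) : |trunc M a - trunc M b| ≤ 2 * M := by
  have h1 : |trunc M a| ≤ M := by
    unfold trunc
    rw [abs_le]
    constructor
    · exact le_max_left _ _
    · exact max_le (by linarith) (min_le_right _ _)
  have h2 : |trunc M b| ≤ M := by
    unfold trunc
    rw [abs_le]
    constructor
    · exact le_max_left _ _
    · exact max_le (by linarith) (min_le_right _ _)
  calc |trunc M a - trunc M b| ≤ |trunc M a| + |trunc M b| := abs_sub _ _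
    _ ≤ 2 * M := by linarith

lemma trunc_key (M : ℝ) (hM : 0 < M) (a b : ℝ) :
    |trunc M a - trunc M b| ≤ max (2 * M) 1 * min |a - b| 1 := by
  rcases le_total |a - b| 1 with h | h
  · rw [min_eq_left h]
    calc |trunc M a - trunc M b| ≤ |a - b| := trunc_lip M a b
      _ = 1 * |a - b| := (one_mul _).symm
      _ ≤ max (2 * M) 1 * |a - b| :=
        mul_le_mul_of_nonneg_right (le_max_right _ _) (abs_nonneg _)
  · rw [min_eq_right h]
    calc |trunc M a - trunc M b| ≤ 2 * M := trunc_bdd M a b hM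
      _ ≤ max (2 * M) 1 := le_max_left _ _
      _ = max (2 * M) 1 * 1 := (mul_one _).symm

theorem stmt2 {X : Type*} [MeasurableSpace X] (μ : Measure X) (p : ℝ) (hp : 1 ≤ p)
    (F : Set (X → ℝ)) (hF : ∀ f ∈ F, MemLambda μ p f)
    (htb : TotallyBoundedDist (fun f g => nuF μ p (f - g)) F) :
    ∀ M : ℝ, 0 < M →
      TotallyBoundedDist (fun u v => lpNorm μ p (u - v)) ((fun f => trunc M ∘ f) '' F) := by
  classical
  intro M hM ε hε
  have hp0 : 0 < p := lt_of_lt_of_le one_pos hp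
  set C : ℝ := max (2 * M) 1 with hC
  have hC0 : 0 < C := lt_of_lt_of_le one_pos (le_max_right _ _)
  set Ce : ℝ≥0∞ := ENNReal.ofReal C with hCe
  have hCe0 : Ce ≠ 0 := by
    simp [hCe, ENNReal.ofReal_eq_zero, not_le, hC0]
  have hCet : Ce ≠ ⊤ := ENNReal.ofReal_ne_top
  -- the key norm inequality
  have key : ∀ f g : X → ℝ,
      lpNorm μ p (trunc M ∘ f - trunc M ∘ g) ≤ Ce * nuF μ p (f - g) := by
    intro f g
    have step1 : (∫⁻ x, ENNReal.ofReal (|(trunc M ∘ f - trunc M ∘ g) x| ^ p) ∂μ)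
        ≤ ∫⁻ x, ENNReal.ofReal (C ^ p) * ENNReal.ofReal (min |(f - g) x| 1 ^ p) ∂μ := by
      apply lintegral_mono
      intro x
      have hptw : |(trunc M ∘ f - trunc M ∘ g) x| ≤ C * min |(f - g) x| 1 := by
        simp only [Pi.sub_apply, Function.comp_apply]
        exact trunc_key M hM (f x) (g x)
      have hrp : |(trunc M ∘ f - trunc M ∘ g) x| ^ p ≤ (C * min |(f - g) x| 1) ^ p :=
        Real.rpow_le_rpow (abs_nonneg _) hptw (le_of_lt hp0)
      have hmin0 : 0 ≤ min |(f - g) x| 1 := le_min (abs_nonneg _) zero_le_one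
      have : (C * min |(f - g) x| 1) ^ p = C ^ p * (min |(f - g) x| 1) ^ p :=
        Real.mul_rpow (le_of_lt hC0) hmin0
      dsimp only
      rw [← ENNReal.ofReal_mul (Real.rpow_nonneg (le_of_lt hC0) p)]
      exact ENNReal.ofReal_le_ofReal (by rw [← this]; exact hrp)
    have step2 : (∫⁻ x, ENNReal.ofReal (C ^ p) * ENNReal.ofReal (min |(f - g) x| 1 ^ p) ∂μ)
        = ENNReal.ofReal (C ^ p) * ∫⁻ x, ENNReal.ofReal (min |(f - g) x| 1 ^ p) ∂μ :=
      lintegral_const_mul' _ _ ENNReal.ofReal_ne_top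
    have hcp : (ENNReal.ofReal (C ^ p)) ^ (1 / p) = Ce := by
      rw [← ENNReal.ofReal_rpow_of_pos hC0, ← ENNReal.rpow_mul, mul_one_div,
        div_self (ne_of_gt hp0), ENNReal.rpow_one]
    calc lpNorm μ p (trunc M ∘ f - trunc M ∘ g)
        ≤ (ENNReal.ofReal (C ^ p) * ∫⁻ x, ENNReal.ofReal (min |(f - g) x| 1 ^ p) ∂μ) ^ (1 / p) := by
          unfold _root_.lpNorm
          rw [← step2]
          exact ENNReal.rpow_le_rpow step1 (by positivity)
      _ = Ce * nuF μ p (f - g) := by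
          rw [ENNReal.mul_rpow_of_nonneg _ _ (by positivity), hcp]; rfl
  -- choose δ
  set δ : ℝ≥0∞ := min ε 1 / Ce with hδ
  have hδ0 : 0 < δ := by
    apply ENNReal.div_pos
    · exact ne_of_gt (lt_min hε one_pos)
    · exact hCet
  obtain ⟨G, hG⟩ := htb δ hδ0
  refine ⟨G.image (fun g => trunc M ∘ g), ?_⟩
  rintro u ⟨f, hfF, rfl⟩
  obtain ⟨g, hgG, hg⟩ := hG f hfF
  refine ⟨trunc M ∘ g, Finset.mem_image_of_mem _ hgG, ?_⟩
  have h1 : lpNorm μ p (trunc M ∘ f - trunc M ∘ g) ≤ Ce * nuF μ p (f - g) := key f g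
  have h2 : Ce * nuF μ p (f - g) < Ce * δ := by
    exact ENNReal.mul_lt_mul_iff_right hCe0 hCet |>.mpr hg
  have h3 : Ce * δ ≤ ε := by
    rw [hδ, ENNReal.mul_div_cancel hCe0 hCet]
    exact min_le_left _ _
  exact lt_of_le_of_lt h1 (lt_of_lt_of_le h2 h3)
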